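/- arXiv:2301.09352 — 2 statements merged into one kernel-verified Lean document; each statement's English description precedes it below -/
import Mathlib

section
/- Let x ∈ ℝ^N, let R > 0 and y ∈ ℝ^N with |x - y| = R, and let k < N. Then for every 1 ≤ k₁ ≤ k there exist orthonormal vectors ξ̄₁,…,ξ̄_{k₁} in ℝ^N such that ⟨ξ̄_j, (y - x)/|y - x|⟩ ≥ 1/√(k₁ N) for every j = 1,…,k₁, provided there exists a unit vector ξ with ⟨ξ, (y-x)/|y-x|⟩ ≥ 1/√N and the ξ̄_j are required to span the same k₁-dimensional space as a given orthonormal family containing ξ. -/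
open scoped RealInnerProductSpace

theorem stmt_8 {N k k₁ : ℕ} (hkN : k < N) (hk₁ : 1 ≤ k₁) (hk₁k : k₁ ≤ k)
    (x y : EuclideanSpace ℝ (Fin N)) (R : ℝ) (hR : 0 < R) (hxy : ‖x - y‖ = R)
    (v : EuclideanSpace ℝ (Fin N)) (hv : v = ‖y - x‖⁻¹ • (y - x))
    (V : Submodule ℝ (EuclideanSpace ℝ (Fin N))) (hV : Module.finrank ℝ V = k₁)
    (ξ : EuclideanSpace ℝ (Fin N)) (hξV : ξ ∈ V) (hξ : ‖ξ‖ = 1)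
    (hξv : 1 / Real.sqrt N ≤ (inner ℝ ξ v : ℝ)) :
    ∃ ξbar : Fin k₁ → EuclideanSpace ℝ (Fin N),
      Orthonormal ℝ ξbar ∧ (∀ j, ξbar j ∈ V) ∧
      Submodule.span ℝ (Set.range ξbar) = V ∧
      ∀ j, 1 / Real.sqrt (k₁ * N) ≤ (inner ℝ (ξbar j) v : ℝ) := by
  let e : OrthonormalBasis (Fin k₁) ℝ V := stdOrthonormalBasis ℝ V |>.reindex (finCongr (by simp [hV]))
  -- coordinates of v against e
  let c : EuclideanSpace ℝ (Fin k₁) := WithLp.toLp 2 (fun i => (inner ℝ ((e i : EuclideanSpace ℝ (Fin N))) v : ℝ))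
  -- key expansion lemma
  have key : ∀ u : V, (inner ℝ (↑u : EuclideanSpace ℝ (Fin N)) v : ℝ) = (inner ℝ (e.repr u) c : ℝ) := by
    intro u
    conv_lhs => rw [← e.sum_repr u]
    push_cast [Submodule.coe_sum]
    rw [sum_inner, PiLp.inner_apply]
    simp [c, real_inner_smul_left, PiLp.inner_apply, Finset.mul_sum, mul_assoc]
    refine Finset.sum_congr rfl (fun x _ => ?_); rw [Finset.sum_mul]; exact Finset.sum_congr rfl (fun i _ => by ring)
  -- norm of c is at least 1/√N
  have hc : 1 / Real.sqrt N ≤ ‖c‖ := by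
    have h1 : (inner ℝ ξ v : ℝ) = inner ℝ (e.repr ⟨ξ, hξV⟩) c := key ⟨ξ, hξV⟩
    have h2 : (inner ℝ (e.repr ⟨ξ, hξV⟩) c : ℝ) ≤ ‖e.repr ⟨ξ, hξV⟩‖ * ‖c‖ := real_inner_le_norm _ _
    have h3 : ‖e.repr (⟨ξ, hξV⟩ : V)‖ = 1 := by
      rw [e.repr.norm_map]
      simpa using hξ
    calc 1 / Real.sqrt N ≤ (inner ℝ ξ v : ℝ) := hξv
      _ ≤ ‖c‖ := by rw [h1]; simpa [h3] using h2
  have hk₁pos : (0:ℝ) < Real.sqrt k₁ := Real.sqrt_pos.2 (by exact_mod_cast hk₁)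
  -- the constant vector w
  let w : EuclideanSpace ℝ (Fin k₁) := WithLp.toLp 2 (fun _ => ‖c‖ / Real.sqrt k₁)
  have hw : ‖w‖ = ‖c‖ := by
    rw [EuclideanSpace.norm_eq]
    have h4 : ∀ i : Fin k₁, ‖w i‖ ^ 2 = ‖c‖^2 / (k₁:ℝ) := by
      intro i
      simp only [w, Real.norm_eq_abs, sq_abs, div_pow, Real.sq_sqrt (Nat.cast_nonneg k₁)]
    rw [Finset.sum_congr rfl (fun i _ => h4 i), Finset.sum_const, Finset.card_univ,
      Fintype.card_fin, nsmul_eq_mul, mul_div_cancel₀]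
    · exact Real.sqrt_sq (norm_nonneg c)
    · exact_mod_cast (by omega : k₁ ≠ 0)
  -- isometry sending w to c
  let f : EuclideanSpace ℝ (Fin k₁) ≃ₗᵢ[ℝ] EuclideanSpace ℝ (Fin k₁) :=
    Submodule.reflection (ℝ ∙ (c - w))ᗮ
  have hf : f c = w := Submodule.reflection_sub hw.symm
  -- the new orthonormal basis of V
  let b : OrthonormalBasis (Fin k₁) ℝ V :=
    (EuclideanSpace.basisFun (Fin k₁) ℝ).map (f.symm.trans e.repr.symm)
  refine ⟨fun j => (b j : EuclideanSpace ℝ (Fin N)), ?_, fun j => (b j).2, ?_, ?_⟩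
  · exact b.orthonormal.comp_linearIsometry V.subtypeₗᵢ
  · have : Set.range (fun j => (b j : EuclideanSpace ℝ (Fin N))) =
        V.subtype '' Set.range b := by
      rw [← Set.range_comp]; rfl
    rw [this, ← Submodule.map_span, ← b.coe_toBasis, b.toBasis.span_eq]
    · simpa using Submodule.map_subtype_top V
  · intro j
    have hb : e.repr (b j) = f.symm (EuclideanSpace.single j 1) := by
      simp [b, OrthonormalBasis.map_apply, LinearIsometryEquiv.trans_apply,
        EuclideanSpace.basisFun_apply]
    have h5 : (inner ℝ ((b j : EuclideanSpace ℝ (Fin N))) v : ℝ) = ‖c‖ / Real.sqrt k₁ := by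
      rw [key (b j), hb]
      have : (inner ℝ (f.symm (EuclideanSpace.single j 1)) c : ℝ)
          = inner ℝ (EuclideanSpace.single j (1:ℝ)) (f c) := by
        rw [← f.inner_map_map (f.symm (EuclideanSpace.single j 1)) c,
          f.apply_symm_apply]
      rw [this, hf, EuclideanSpace.inner_single_left]
      simp [w]
    rw [h5]
    rw [Real.sqrt_mul (Nat.cast_nonneg k₁),
      show (1:ℝ)/(Real.sqrt k₁ * Real.sqrt N) = (1/Real.sqrt N)/Real.sqrt k₁ by ring]
    gcongr
end

section
/- Let x ∈ ℝ^N with |x| ≤ 1, let k₁ ≤ N, let ξ₁,…,ξ_{k₁} be orthonormal with ⟨x/|x|, ξ_j⟩ ≥ 1/√(k₁N) for all j (x ≠ 0), and let τ ∈ ℝ^{k₁} with t₁ < τ_j < t₂ < 0 for all j, where √(k₁) t_{1,2} = −|x|/√N ∓ √(1 − 1/(2N) − |x|²(1 − 1/N)). Then |x + Σ_j τ_j ξ_j|² ≤ 1 − 1/(2N). -/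
theorem stmt_16 {N k₁ : ℕ} (hk₁ : 1 ≤ k₁) (hk₁N : k₁ ≤ N)
    (x : EuclideanSpace ℝ (Fin N)) (hx : x ≠ 0) (hx1 : ‖x‖ ≤ 1)
    (hdisc : 0 ≤ 1 - 1/(2*N) - ‖x‖^2 * (1 - 1/N))
    (t₁ t₂ : ℝ)
    (ht₁ : Real.sqrt k₁ * t₁ = -‖x‖/Real.sqrt N - Real.sqrt (1 - 1/(2*N) - ‖x‖^2 * (1 - 1/N)))
    (ht₂ : Real.sqrt k₁ * t₂ = -‖x‖/Real.sqrt N + Real.sqrt (1 - 1/(2*N) - ‖x‖^2 * (1 - 1/N)))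
    (ht₂0 : t₂ < 0)
    (ξ : Fin k₁ → EuclideanSpace ℝ (Fin N)) (hξ : Orthonormal ℝ ξ)
    (hξx : ∀ j, 1 / Real.sqrt (k₁ * N) ≤ (inner ℝ (‖x‖⁻¹ • x) (ξ j) : ℝ))
    (τ : Fin k₁ → ℝ) (hτ : ∀ j, t₁ < τ j ∧ τ j < t₂) :
    ‖x + ∑ j, τ j • ξ j‖^2 ≤ 1 - 1/(2*N) := by
  have hk : (1:ℝ) ≤ k₁ := by exact_mod_cast hk₁
  have hN : (1:ℝ) ≤ N := by exact_mod_cast hk₁.trans hk₁N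
  have hkpos : (0:ℝ) < k₁ := by linarith
  have hNpos : (0:ℝ) < N := by linarith
  have hxpos : 0 < ‖x‖ := norm_pos_iff.mpr hx
  set sk := Real.sqrt k₁ with hsk
  set sN := Real.sqrt N with hsN
  set sD := Real.sqrt (1 - 1/(2*N) - ‖x‖^2 * (1 - 1/N)) with hsD
  have hskpos : 0 < sk := Real.sqrt_pos.mpr hkpos
  have hsNpos : 0 < sN := Real.sqrt_pos.mpr hNpos
  have hsk2 : sk^2 = k₁ := Real.sq_sqrt hkpos.le
  have hsN2 : sN^2 = N := Real.sq_sqrt hNpos.le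
  have hsD2 : sD^2 = 1 - 1/(2*N) - ‖x‖^2 * (1 - 1/N) := Real.sq_sqrt hdisc
  have hskN : Real.sqrt (k₁ * N) = sk * sN := by
    rw [hsk, hsN]; push_cast; exact Real.sqrt_mul (Nat.cast_nonneg _) _
  set a : ℝ := ‖x‖ / sN with ha
  have ha' : a * sN = ‖x‖ := div_mul_cancel₀ _ hsNpos.ne'
  have ha2 : a^2 * N = ‖x‖^2 := by
    have : (a * sN)^2 = ‖x‖^2 := by rw [ha']
    nlinarith [hsN2]
  set c : ℝ := ‖x‖ / Real.sqrt (k₁ * N) with hc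
  have hc' : c * sk = a := by
    rw [hc, hskN, ha]
    field_simp
  -- inner bound
  have hinner : ∀ j, c ≤ (inner ℝ x (ξ j) : ℝ) := by
    intro j
    have h := hξx j
    rw [real_inner_smul_left] at h
    rw [hc, div_le_iff₀ (Real.sqrt_pos.mpr (by positivity : (0:ℝ) < (k₁:ℝ) * N))]
    have h2 : ‖x‖ * (1 / Real.sqrt (↑k₁ * ↑N)) ≤ ‖x‖ * (‖x‖⁻¹ * inner ℝ x (ξ j)) :=
      mul_le_mul_of_nonneg_left h hxpos.le
    rw [mul_inv_cancel_left₀ hxpos.ne'] at h2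
    calc (inner ℝ x (ξ j) : ℝ) * Real.sqrt (↑k₁ * ↑N)
        ≥ ‖x‖ * (1 / Real.sqrt (↑k₁ * ↑N)) * Real.sqrt (↑k₁ * ↑N) := by
          apply mul_le_mul_of_nonneg_right h2 (Real.sqrt_nonneg _)
      _ = ‖x‖ := by
          field_simp
  -- per-term bound
  have key : ∀ j, (τ j)^2 + 2 * (τ j) * c ≤ (1 - 1/(2*N) - ‖x‖^2) / k₁ := by
    intro j
    obtain ⟨hl, hr⟩ := hτ j
    set u := sk * τ j with hu
    have hu1 : sk * t₁ < u := by exact mul_lt_mul_of_pos_left hl hskpos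
    have hu2 : u < sk * t₂ := by exact mul_lt_mul_of_pos_left hr hskpos
    rw [ht₁] at hu1
    rw [ht₂] at hu2
    rw [neg_div] at hu1 hu2
    have hprod : 0 < (u - (-a - sD)) * ((-a + sD) - u) := by
      have h1 : 0 < u - (-a - sD) := by rw [ha]; linarith
      have h2 : 0 < (-a + sD) - u := by rw [ha]; linarith
      exact mul_pos h1 h2
    have hsq : (u + a)^2 < sD^2 := by
      have hr2 : (u - (-a - sD)) * ((-a + sD) - u) = sD^2 - (u+a)^2 := by ring
      rw [hr2] at hprod; linarith
    have ha2' : a^2 = ‖x‖^2 / N := by rw [ha, div_pow, hsN2]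
    have hD' : sD^2 = 1 - 1/(2*N) - ‖x‖^2 + ‖x‖^2/N := by rw [hsD2]; ring
    have hid : u^2 + 2*u*a = (u+a)^2 - a^2 := by ring
    -- hence u^2 + 2*u*a < 1 - 1/(2N) - ‖x‖^2
    have hq : u^2 + 2*u*a < 1 - 1/(2*N) - ‖x‖^2 := by
      rw [hid, ha2']; rw [hD'] at hsq; linarith
    rw [le_div_iff₀ hkpos]
    have hexp : ((τ j)^2 + 2 * (τ j) * c) * k₁ = u^2 + 2*u*a := by
      rw [hu, ← hc', ← hsk2]; ring
    rw [hexp]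
    linarith
  -- expansion
  have hexp : ‖x + ∑ j, τ j • ξ j‖^2
      = ‖x‖^2 + 2 * ∑ j, τ j * (inner ℝ x (ξ j) : ℝ) + ∑ j, (τ j)^2 := by
    rw [norm_add_sq_real]
    congr 2
    · rw [inner_sum]
      simp only [real_inner_smul_right]
    · rw [← real_inner_self_eq_norm_sq, sum_inner]
      simp only [real_inner_smul_left, inner_sum, real_inner_smul_right,
        orthonormal_iff_ite.mp hξ]
      simp [mul_ite, Finset.sum_ite_eq', sq]
  rw [hexp]
  have hsum1 : ∑ j, τ j * (inner ℝ x (ξ j) : ℝ) ≤ ∑ j, τ j * c := by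
    apply Finset.sum_le_sum
    intro j _
    have hτneg : τ j ≤ 0 := le_of_lt ((hτ j).2.trans ht₂0)
    exact mul_le_mul_of_nonpos_left (hinner j) hτneg
  have hsum2 : ∑ j, ((τ j)^2 + 2 * (τ j) * c) ≤ ∑ j : Fin k₁, (1 - 1/(2*N) - ‖x‖^2) / k₁ := by
    apply Finset.sum_le_sum
    intro j _
    exact key j
  have hcard : ∑ _j : Fin k₁, (1 - 1/(2*N) - ‖x‖^2) / k₁ = 1 - 1/(2*N) - ‖x‖^2 := by
    rw [Finset.sum_const, Finset.card_univ, Fintype.card_fin, nsmul_eq_mul]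
    field_simp
  rw [Finset.sum_add_distrib] at hsum2
  have : ∑ j, 2 * (τ j) * c = 2 * ∑ j, τ j * c := by
    rw [Finset.mul_sum]; exact Finset.sum_congr rfl fun j _ => by ring
  rw [this, hcard] at hsum2
  linarith
end
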